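/- For all natural numbers k ≤ d, the number of positions i such that the contiguous sublist of S_d starting at index i of length |S_k| = 2^{k+1}-1 equals S_k is exactly 2^{d-k}. -/

import Mathlib

def S : ℕ → List ℕ
  | 0 => [1]
  | k + 1 => S k ++ S k ++ [2 ^ (k + 1)]

lemma S_length (k : ℕ) : (S k).length = 2 ^ (k + 1) - 1 := by
  induction k with
  | zero => simp [S]
  | succ k ih =>
    have h1 : 1 ≤ 2 ^ (k + 1) := Nat.one_le_two_pow
    have h2 : 2 ^ (k + 2) = 2 * 2 ^ (k + 1) := by ring
    simp [S, ih]
    omega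

lemma S_length_pos (k : ℕ) : 0 < (S k).length := by
  have h1 : 1 ≤ 2 ^ (k + 1) := Nat.one_le_two_pow
  have := S_length k
  have h2 : (2:ℕ) ≤ 2 ^ (k+1) := by
    calc (2:ℕ) = 2 ^ 1 := rfl
    _ ≤ 2 ^ (k+1) := Nat.pow_le_pow_right (by norm_num) (by omega)
  omega

lemma S_le {k x : ℕ} (hx : x ∈ S k) : x ≤ 2 ^ k := by
  induction k with
  | zero => simp [S] at hx; omega
  | succ k ih =>
    have hle : 2 ^ k ≤ 2 ^ (k + 1) := Nat.pow_le_pow_right (by norm_num) (by omega)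
    have hx' : x ∈ S k ++ S k ++ [2 ^ (k+1)] := hx
    simp only [List.mem_append, List.mem_singleton] at hx'
    rcases hx' with (hx' | hx') | hx'
    · exact le_trans (ih hx') hle
    · exact le_trans (ih hx') hle
    · omega

lemma S_count (k : ℕ) : (S k).count (2 ^ k) = 1 := by
  induction k with
  | zero => simp [S]
  | succ k ih =>
    have hnot : 2 ^ (k + 1) ∉ S k := by
      intro h
      have h1 := S_le h
      have h2 : 2 ^ k < 2 ^ (k + 1) := Nat.pow_lt_pow_right (by norm_num) (by omega)
      omega
    show ((S k ++ S k ++ [2 ^ (k+1)]).count (2 ^ (k+1))) = 1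
    simp [List.count_append, List.count_eq_zero_of_not_mem hnot]

lemma S_concat (k : ℕ) : ∃ T : List ℕ, S k = T ++ [2 ^ k] := by
  cases k with
  | zero => exact ⟨[], rfl⟩
  | succ k => exact ⟨S k ++ S k, rfl⟩

/-- occurrence implies it fits -/
lemma occ_fits {k : ℕ} {A : List ℕ} {i : ℕ}
    (h : (A.drop i).take (S k).length = S k) : i + (S k).length ≤ A.length := by
  have h' := congrArg List.length h
  rw [List.length_take, List.length_drop] at h'
  have := S_length_pos k
  omega

/-- no occurrence crossing the boundary in S (e+1) starting in the first copy -/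
lemma no_cross {k e i : ℕ} (hk : k ≤ e) (hi : i < (S e).length)
    (hie : (S e).length < i + (S k).length)
    (h : ((S (e+1)).drop i).take (S k).length = S k) : False := by
  have hdrop : (S (e+1)).drop i = (S e).drop i ++ (S e ++ [2 ^ (e+1)]) := by
    show ((S e ++ S e) ++ [2 ^ (e+1)]).drop i = _
    rw [List.append_assoc, List.drop_append_of_le_length (by omega)]
  have hlendrop : ((S e).drop i).length = (S e).length - i := List.length_drop
  have htake : ((S (e+1)).drop i).take (S k).length
      = (S e).drop i ++ (S e ++ [2 ^ (e+1)]).take ((S k).length - ((S e).length - i)) := by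
    rw [hdrop, List.take_append, hlendrop,
      List.take_of_length_le (by omega)]
  obtain ⟨T, hT⟩ := S_concat e
  have hTlen : T.length + 1 = (S e).length := by rw [hT]; simp
  have hdropA : (S e).drop i = T.drop i ++ [2 ^ e] := by
    rw [hT, List.drop_append_of_le_length (by omega)]
  have hmem : (2 : ℕ) ^ e ∈ S k := by
    rw [← h, htake, hdropA]
    simp
  have hek : e = k := by
    have h1 := S_le hmem
    have h2 : 2 ^ k ≤ 2 ^ e := Nat.pow_le_pow_right (by norm_num) hk
    exact Nat.pow_right_injective (le_refl 2) (le_antisymm h1 h2)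
  subst hek
  have hm : (S e).length - ((S e).length - i) = i := by omega
  have hipos : 0 < i := by omega
  have htakei : (S e ++ [2 ^ (e+1)]).take i = (S e).take i :=
    List.take_append_of_le_length (by omega)
  have hrot : S e = (S e).drop i ++ (S e).take i := by
    conv_lhs => rw [← h]
    rw [htake, hm, htakei]
  have hmem1 : (2:ℕ) ^ e ∈ (S e).drop i := by rw [hdropA]; simp
  have h5 : (S e).drop ((S e).length - i) = (S e).take i := by
    have h5' := congrArg (List.drop ((S e).length - i)) hrot
    rw [List.drop_left' hlendrop] at h5'
    exact h5'
  have h6 : (S e).drop ((S e).length - i) = T.drop ((S e).length - i) ++ [2 ^ e] := by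
    set n := (S e).length - i with hn
    rw [hT]
    exact List.drop_append_of_le_length (by omega)
  have hmem2 : (2:ℕ) ^ e ∈ (S e).take i := by
    rw [← h5, h6]; simp
  have hcnt : (S e).count (2 ^ e) ≥ 2 := by
    conv_lhs => rw [hrot]
    rw [List.count_append]
    have c1 := List.count_pos_iff.mpr hmem1
    have c2 := List.count_pos_iff.mpr hmem2
    omega
  rw [S_count] at hcnt
  omega

/-- no occurrence crossing the end boundary in S e ++ [2^(e+1)] -/
lemma no_cross2 {k e j : ℕ} (hk : k ≤ e) (hj : j ≤ (S e).length)
    (hje : (S e).length < j + (S k).length)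
    (h : ((S e ++ [2 ^ (e+1)]).drop j).take (S k).length = S k) : False := by
  have hdrop : (S e ++ [2 ^ (e+1)]).drop j = (S e).drop j ++ [2 ^ (e+1)] :=
    List.drop_append_of_le_length hj
  have hlendrop : ((S e).drop j).length = (S e).length - j := List.length_drop
  have htake : ((S e ++ [2 ^ (e+1)]).drop j).take (S k).length
      = (S e).drop j ++ [2 ^ (e+1)].take ((S k).length - ((S e).length - j)) := by
    rw [hdrop, List.take_append, hlendrop,
      List.take_of_length_le (by omega)]
  have hm : 1 ≤ (S k).length - ((S e).length - j) := by omega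
  have htake1 : [(2:ℕ) ^ (e+1)].take ((S k).length - ((S e).length - j)) = [2 ^ (e+1)] :=
    List.take_of_length_le (by simp; omega)
  have hmem : (2:ℕ) ^ (e+1) ∈ S k := by
    rw [← h, htake, htake1]; simp
  have h1 := S_le hmem
  have h2 : 2 ^ k < 2 ^ (e+1) := Nat.pow_lt_pow_right (by norm_num) (by omega)
  omega

lemma S_succ_length (e : ℕ) : (S (e+1)).length = (S e).length + (S e).length + 1 := by
  show ((S e ++ S e) ++ [2 ^ (e+1)]).length = _
  simp
  omega

lemma drop_second {e i : ℕ} (hi : (S e).length ≤ i) :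
    (S (e+1)).drop i = (S e ++ [2 ^ (e+1)]).drop (i - (S e).length) := by
  show ((S e ++ S e) ++ [2 ^ (e+1)]).drop i = _
  rw [List.append_assoc, List.drop_append,
    List.drop_eq_nil_of_le (by omega), List.nil_append]

theorem S_appearances (k d : ℕ) (h : k ≤ d) :
    ((Finset.range ((S d).length)).filter
      (fun i => (((S d).drop i).take (2 ^ (k + 1) - 1)) = S k)).card = 2 ^ (d - k) := by
  have hLk : 2 ^ (k + 1) - 1 = (S k).length := (S_length k).symm
  rw [hLk]
  induction d, h using Nat.le_induction with
  | base =>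
    rw [Nat.sub_self, pow_zero]
    have heq : (Finset.range ((S k).length)).filter
        (fun i => (((S k).drop i).take (S k).length) = S k) = {0} := by
      ext i
      simp only [Finset.mem_filter, Finset.mem_range, Finset.mem_singleton]
      constructor
      · rintro ⟨hi, hocc⟩
        have := occ_fits hocc
        omega
      · rintro rfl
        refine ⟨S_length_pos k, ?_⟩
        simp
    rw [heq]; simp
  | succ e hke ih =>
    have hlen := S_succ_length e
    have hLpos : 0 < (S k).length := S_length_pos k
    have key : (Finset.range ((S (e+1)).length)).filter
          (fun i => (((S (e+1)).drop i).take (S k).length) = S k)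
        = ((Finset.range (S e).length).filter
            (fun i => (((S e).drop i).take (S k).length) = S k))
          ∪ (((Finset.range (S e).length).filter
              (fun i => (((S e).drop i).take (S k).length) = S k)).image
              (· + (S e).length)) := by
      ext i
      simp only [Finset.mem_filter, Finset.mem_range, Finset.mem_union, Finset.mem_image]
      constructor
      · rintro ⟨hi, hocc⟩
        rw [hlen] at hi
        by_cases hiA : i < (S e).length
        · left
          refine ⟨hiA, ?_⟩
          have hfit : i + (S k).length ≤ (S e).length := by
            by_contra hc
            exact no_cross hke hiA (by omega) hocc
          have hdrop : (S (e+1)).drop i = (S e).drop i ++ (S e ++ [2 ^ (e+1)]) := by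
            show ((S e ++ S e) ++ [2 ^ (e+1)]).drop i = _
            rw [List.append_assoc, List.drop_append_of_le_length (by omega)]
          rw [hdrop, List.take_append_of_le_length (by rw [List.length_drop]; omega)] at hocc
          exact hocc
        · right
          push_neg at hiA
          rw [drop_second hiA] at hocc
          have hfit : (i - (S e).length) + (S k).length ≤ (S e).length := by
            by_contra hc
            exact no_cross2 hke (by omega) (by omega) hocc
          refine ⟨i - (S e).length, ⟨by omega, ?_⟩, by omega⟩
          rw [List.drop_append_of_le_length (by omega),
            List.take_append_of_le_length (by rw [List.length_drop]; omega)] at hocc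
          exact hocc
      · rintro (⟨hi, hocc⟩ | ⟨j, ⟨hj, hocc⟩, rfl⟩)
        · have hfit := occ_fits hocc
          refine ⟨by omega, ?_⟩
          have hdrop : (S (e+1)).drop i = (S e).drop i ++ (S e ++ [2 ^ (e+1)]) := by
            show ((S e ++ S e) ++ [2 ^ (e+1)]).drop i = _
            rw [List.append_assoc, List.drop_append_of_le_length (by omega)]
          rw [hdrop, List.take_append_of_le_length (by rw [List.length_drop]; omega)]
          exact hocc
        · have hfit := occ_fits hocc
          refine ⟨by omega, ?_⟩
          rw [drop_second (by omega : (S e).length ≤ j + (S e).length),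
            Nat.add_sub_cancel, List.drop_append_of_le_length (by omega),
            List.take_append_of_le_length (by rw [List.length_drop]; omega)]
          exact hocc
    rw [key]
    have hdisj : Disjoint
        ((Finset.range (S e).length).filter
          (fun i => (((S e).drop i).take (S k).length) = S k))
        (((Finset.range (S e).length).filter
            (fun i => (((S e).drop i).take (S k).length) = S k)).image
            (· + (S e).length)) := by
      rw [Finset.disjoint_left]
      rintro a ha hb
      simp only [Finset.mem_filter, Finset.mem_range] at ha
      simp only [Finset.mem_image, Finset.mem_filter, Finset.mem_range] at hb
      obtain ⟨j, _, rfl⟩ := hb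
      omega
    rw [Finset.card_union_of_disjoint hdisj,
      Finset.card_image_of_injective _ (add_left_injective (S e).length), ih]
    have hsub : e + 1 - k = (e - k) + 1 := by omega
    rw [hsub, pow_succ]
    ring
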